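/- arXiv:2104.04229 — 2 statements merged into one kernel-verified Lean document; each statement's English description precedes it below -/
import Mathlib

section
/- Let T be a tree (connected acyclic graph) on vertex set V, let a ∈ V be a non-leaf or leaf vertex with neighbor set {c_1, ..., c_k} listed in some order. Then the graph obtained by deleting a and all edges incident to a, and adding the edges (c_1,c_2), (c_2,c_3), ..., (c_{k−1},c_k), is again a tree on V \ {a}. -/
/-- The graph obtained from `T` by deleting the vertex `a` and reconnecting its
neighbors `c 0, c 1, ..., c (m-1)` along a path. -/
def reconnect {V : Type*} (T : SimpleGraph V) (a : V) (m : ℕ) (c : Fin m → V) :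
    SimpleGraph {v : V // v ≠ a} :=
  SimpleGraph.fromRel (fun u v =>
    T.Adj u.1 v.1 ∨ ∃ i j : Fin m, (j : ℕ) = (i : ℕ) + 1 ∧ u.1 = c i ∧ v.1 = c j)

namespace ReconnectAux

open SimpleGraph Walk

variable {V : Type*}

/-- Invariants are preserved along reachability. -/
lemma reach_inv {α : Type*} {β : Sort*} {G : SimpleGraph α} (f : α → β)
    (h : ∀ ⦃u v⦄, G.Adj u v → f u = f v) {u v : α} (huv : G.Reachable u v) : f u = f v := by
  obtain ⟨p⟩ := huv
  induction p with
  | nil => rfl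
  | cons hadj _ ih => exact (h hadj).trans ih

/-- A walk avoiding `a` gives reachability in `T` minus all edges at `a`. -/
lemma walk_avoid {T : SimpleGraph V} {a : V} :
    ∀ {u v : V} (p : T.Walk u v), a ∉ p.support →
      (T.deleteEdges {e : Sym2 V | a ∈ e}).Reachable u v
  | _, _, Walk.nil, _ => Reachable.refl _
  | x, v, @SimpleGraph.Walk.cons _ _ _ y _ h q, hp => by
    have hax : a ≠ x := fun h' => hp (by simp [h'])
    have hay : a ≠ y := fun h' => hp (by simp [h', Walk.start_mem_support])
    have haq : a ∉ q.support := fun h' => hp (by simp [h'])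
    have hadj : (T.deleteEdges {e : Sym2 V | a ∈ e}).Adj x y := by
      rw [SimpleGraph.deleteEdges_adj]
      refine ⟨h, ?_⟩
      simp only [Set.mem_setOf_eq, Sym2.mem_iff]
      rintro (h' | h')
      exacts [hax h', hay h']
    exact hadj.reachable.trans (walk_avoid q haq)

/-- A walk in `T` minus all edges at `a`, starting away from `a`, avoids `a`. -/
lemma ta_support {T : SimpleGraph V} {a : V} :
    ∀ {u v : V} (p : (T.deleteEdges {e : Sym2 V | a ∈ e}).Walk u v), u ≠ a → a ∉ p.support
  | u, _, Walk.nil, hu => by simpa using (Ne.symm hu)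
  | x, v, @SimpleGraph.Walk.cons _ _ _ y _ h q, hu => by
    have hy : y ≠ a := by
      intro h'
      exact ((SimpleGraph.deleteEdges_adj).mp h).2 (by simp [Set.mem_setOf_eq, Sym2.mem_iff, h'])
    simp only [Walk.support_cons, List.mem_cons]
    push_neg
    exact ⟨Ne.symm hu, ta_support q hy⟩

variable {T : SimpleGraph V} {a : V} {m : ℕ} {c : Fin m → V}

lemma adj_a (hrange : Set.range c = T.neighborSet a) (k : Fin m) : T.Adj a (c k) := by
  have : c k ∈ T.neighborSet a := hrange ▸ Set.mem_range_self k
  exact this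

lemma branch_exists (hT : T.IsTree) (hrange : Set.range c = T.neighborSet a)
    {v : V} (hv : v ≠ a) :
    ∃ i, (T.deleteEdges {e : Sym2 V | a ∈ e}).Reachable (c i) v := by
  classical
  obtain ⟨w0⟩ := hT.isConnected a v
  obtain ⟨p, hp⟩ := w0.toPath
  have hnil : ¬ p.Nil := Walk.not_nil_of_ne (Ne.symm hv)
  obtain ⟨w, hadj, q, hq⟩ := Walk.not_nil_iff.mp hnil
  rw [hq, Walk.cons_isPath_iff] at hp
  have hw : w ∈ Set.range c := by rw [hrange]; exact hadj
  obtain ⟨i, hi⟩ := hw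
  exact ⟨i, hi ▸ walk_avoid q hp.2⟩

lemma branch_unique (hT : T.IsTree) (hc : Function.Injective c)
    (hrange : Set.range c = T.neighborSet a) {i j : Fin m} {v : V}
    (hi : (T.deleteEdges {e : Sym2 V | a ∈ e}).Reachable (c i) v)
    (hj : (T.deleteEdges {e : Sym2 V | a ∈ e}).Reachable (c j) v) : i = j := by
  classical
  obtain ⟨w0⟩ := hi.trans hj.symm
  obtain ⟨p, hp⟩ := w0.toPath
  have hsupp : a ∉ p.support := ta_support p (adj_a hrange i).ne'
  let p' := p.map (SimpleGraph.Hom.ofLE (T.deleteEdges_le _))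
  have hp' : p'.IsPath := Walk.map_isPath_of_injective (fun x y h => h) hp
  have hsuppeq : p'.support = p.support := by
    simp only [p', Walk.support_map]
    exact List.map_id _
  have hsupp' : a ∉ p'.support := by rw [hsuppeq]; exact hsupp
  have hP1 : (Walk.cons (adj_a hrange i) p').IsPath :=
    (Walk.cons_isPath_iff _ _).mpr ⟨hp', hsupp'⟩
  have hP2 : (Walk.cons (adj_a hrange j) (Walk.nil)).IsPath := by
    rw [Walk.cons_isPath_iff]
    exact ⟨Walk.IsPath.nil, by simp [(adj_a hrange j).ne]⟩
  have heq := (hT.existsUnique_path a (c j)).unique hP1 hP2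
  have hlen := congrArg Walk.length heq
  simp only [Walk.length_cons, Walk.length_nil, Nat.add_left_inj] at hlen
  exact hc (Walk.eq_of_length_eq_zero hlen)

lemma reconnect_adj_T {x y : {v : V // v ≠ a}} (h : T.Adj x.1 y.1) :
    (reconnect T a m c).Adj x y := by
  simp only [reconnect, SimpleGraph.fromRel_adj]
  exact ⟨fun e => h.ne (congrArg Subtype.val e), Or.inl (Or.inl h)⟩

lemma reconnect_adj_step (hc : Function.Injective c) (hca : ∀ k, c k ≠ a)
    {i j : Fin m} (hj : (j : ℕ) = (i : ℕ) + 1) :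
    (reconnect T a m c).Adj ⟨c i, hca i⟩ ⟨c j, hca j⟩ := by
  simp only [reconnect, SimpleGraph.fromRel_adj]
  refine ⟨?_, Or.inl (Or.inr ⟨i, j, hj, rfl, rfl⟩)⟩
  intro h
  have := hc (congrArg Subtype.val h)
  rw [this] at hj
  omega

lemma cpath_aux (hc : Function.Injective c) (hca : ∀ k, c k ≠ a) :
    ∀ (d : ℕ) (i j : Fin m), (j : ℕ) = (i : ℕ) + d →
      (reconnect T a m c).Reachable ⟨c i, hca i⟩ ⟨c j, hca j⟩ := by
  intro d
  induction d with
  | zero =>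
    intro i j h
    have : i = j := Fin.ext (by omega)
    subst this
    exact Reachable.refl _
  | succ d ih =>
    intro i j h
    have hmid : (i : ℕ) + d < m := by have := j.isLt; omega
    have step : (reconnect T a m c).Adj ⟨c ⟨(i : ℕ) + d, hmid⟩, hca _⟩ ⟨c j, hca j⟩ :=
      reconnect_adj_step hc hca (by simp; omega)
    exact (ih i ⟨(i : ℕ) + d, hmid⟩ rfl).trans step.reachable

lemma cpath (hc : Function.Injective c) (hca : ∀ k, c k ≠ a) (i j : Fin m) :
    (reconnect T a m c).Reachable ⟨c i, hca i⟩ ⟨c j, hca j⟩ := by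
  rcases le_total (i : ℕ) (j : ℕ) with h | h
  · exact cpath_aux hc hca ((j : ℕ) - (i : ℕ)) i j (by omega)
  · exact (cpath_aux hc hca ((i : ℕ) - (j : ℕ)) j i (by omega)).symm

lemma to_reconnect (hc : Function.Injective c) (hrange : Set.range c = T.neighborSet a)
    (hca : ∀ k, c k ≠ a) :
    ∀ (n : ℕ) {x v : V} (hx : x ≠ a) (hv : v ≠ a) (p : T.Walk x v), p.length = n →
      (reconnect T a m c).Reachable ⟨x, hx⟩ ⟨v, hv⟩ := by
  intro n
  induction n using Nat.strong_induction_on with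
  | _ n ih =>
    intro x v hx hv p hlen
    cases p with
    | nil => exact Reachable.refl _
    | @cons _ w _ h q =>
      rw [Walk.length_cons] at hlen
      by_cases hw : w = a
      · cases q with
        | nil => exact absurd hw hv
        | @cons _ w2 _ h2 q2 =>
          rw [Walk.length_cons] at hlen
          have h2' : T.Adj a w2 := hw ▸ h2
          have hw2 : w2 ≠ a := h2'.ne'
          have hxmem : x ∈ Set.range c := by rw [hrange]; exact (hw ▸ h).symm
          have hw2mem : w2 ∈ Set.range c := by rw [hrange]; exact h2'
          obtain ⟨i0, hi0⟩ := hxmem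
          obtain ⟨j0, hj0⟩ := hw2mem
          have e1 : (⟨x, hx⟩ : {v : V // v ≠ a}) = ⟨c i0, hca i0⟩ := Subtype.ext hi0.symm
          have e2 : (⟨w2, hw2⟩ : {v : V // v ≠ a}) = ⟨c j0, hca j0⟩ := Subtype.ext hj0.symm
          have r1 : (reconnect T a m c).Reachable ⟨x, hx⟩ ⟨w2, hw2⟩ := by
            rw [e1, e2]; exact cpath hc hca i0 j0
          exact r1.trans (ih q2.length (by omega) hw2 hv q2 rfl)
      · have hadj : (reconnect T a m c).Adj ⟨x, hx⟩ ⟨w, hw⟩ := reconnect_adj_T h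
        exact hadj.reachable.trans (ih q.length (by omega) hw hv q rfl)

lemma sym2_val_inj {x y u v : {v : V // v ≠ a}}
    (h : s(x.1, y.1) = s(u.1, v.1)) : s(x, y) = s(u, v) := by
  have h2 : Sym2.map (Subtype.val : {v : V // v ≠ a} → V) s(x, y) =
      Sym2.map (Subtype.val : {v : V // v ≠ a} → V) s(u, v) := by
    simpa [Sym2.map_pair_eq] using h
  exact Sym2.map.injective Subtype.val_injective h2

lemma bridge_T (hT : T.IsTree) (hrange : Set.range c = T.neighborSet a)
    {u v : {v : V // v ≠ a}} (hTadj : T.Adj u.1 v.1) :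
    ¬ (reconnect T a m c \ SimpleGraph.fromEdgeSet {s(u, v)}).Reachable u v := by
  intro hreach
  set T' := T.deleteEdges {s(u.1, v.1)} with hT'def
  have hT'a : ∀ k, T'.Adj a (c k) := by
    intro k
    rw [hT'def, SimpleGraph.deleteEdges_adj]
    refine ⟨adj_a hrange k, ?_⟩
    simp only [Set.mem_singleton_iff]
    intro h'
    have : a ∈ s(u.1, v.1) := h' ▸ (by simp)
    rw [Sym2.mem_iff] at this
    rcases this with h'' | h''
    exacts [u.2 h''.symm, v.2 h''.symm]
  have key : ∀ ⦃x y : {v : V // v ≠ a}⦄,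
      (reconnect T a m c \ SimpleGraph.fromEdgeSet {s(u, v)}).Adj x y →
      (T'.Reachable u.1 x.1) = (T'.Reachable u.1 y.1) := by
    intro x y hxy
    rw [SimpleGraph.sdiff_adj, SimpleGraph.fromEdgeSet_adj] at hxy
    obtain ⟨hG, hne⟩ := hxy
    have hxyne : x ≠ y := hG.ne
    have hne' : s(x.1, y.1) ≠ s(u.1, v.1) := by
      intro h'
      exact hne ⟨by simp [sym2_val_inj h'], hxyne⟩
    by_cases hTxy : T.Adj x.1 y.1
    · have hadj : T'.Adj x.1 y.1 := by
        rw [hT'def, SimpleGraph.deleteEdges_adj]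
        exact ⟨hTxy, by simpa using hne'⟩
      exact propext ⟨fun r => r.trans hadj.reachable, fun r => r.trans hadj.symm.reachable⟩
    · simp only [reconnect, SimpleGraph.fromRel_adj] at hG
      obtain ⟨-, hrel⟩ := hG
      have hcase : ∃ i j : Fin m, x.1 = c i ∧ y.1 = c j := by
        rcases hrel with (h' | ⟨i, j, _, h1, h2⟩) | (h' | ⟨i, j, _, h1, h2⟩)
        · exact absurd h' hTxy
        · exact ⟨i, j, h1, h2⟩
        · exact absurd h'.symm hTxy
        · exact ⟨j, i, h2, h1⟩
      obtain ⟨i, j, hxi, hyj⟩ := hcase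
      have rx : T'.Reachable x.1 a := by rw [hxi]; exact (hT'a i).symm.reachable
      have ry : T'.Reachable a y.1 := by rw [hyj]; exact (hT'a j).reachable
      exact propext ⟨fun r => (r.trans rx).trans ry,
        fun r => (r.trans ry.symm).trans rx.symm⟩
  have hfv : T'.Reachable u.1 v.1 := by
    have h := reach_inv (G := reconnect T a m c \ SimpleGraph.fromEdgeSet {s(u, v)})
      (fun w => T'.Reachable u.1 w.1) key hreach
    exact cast h (Reachable.refl _)
  have hbridge := SimpleGraph.isAcyclic_iff_forall_adj_isBridge.mp hT.IsAcyclic hTadj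
  exact (SimpleGraph.isBridge_iff.mp hbridge) hfv

lemma bridge_path (hT : T.IsTree) (hc : Function.Injective c)
    (hrange : Set.range c = T.neighborSet a)
    {u v : {v : V // v ≠ a}} {i j : Fin m} (hji : (j : ℕ) = (i : ℕ) + 1)
    (hui : u.1 = c i) (hvj : v.1 = c j) :
    ¬ (reconnect T a m c \ SimpleGraph.fromEdgeSet {s(u, v)}).Reachable u v := by
  intro hreach
  have hex : ∀ w : {v : V // v ≠ a},
      ∃ k, (T.deleteEdges {e : Sym2 V | a ∈ e}).Reachable (c k) w.1 :=
    fun w => branch_exists hT hrange w.2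
  choose br hbr using hex
  have brc : ∀ (x : {v : V // v ≠ a}) (k : Fin m), x.1 = c k → br x = k := by
    intro x k hk
    exact branch_unique hT hc hrange (hbr x) (by rw [hk])
  have brmap : ∀ x y : {v : V // v ≠ a}, T.Adj x.1 y.1 → br x = br y := by
    intro x y hxy
    have hadj : (T.deleteEdges {e : Sym2 V | a ∈ e}).Adj x.1 y.1 := by
      rw [SimpleGraph.deleteEdges_adj]
      refine ⟨hxy, ?_⟩
      simp only [Set.mem_setOf_eq, Sym2.mem_iff]
      rintro (h' | h')
      exacts [x.2 h'.symm, y.2 h'.symm]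
    exact branch_unique hT hc hrange ((hbr x).trans hadj.reachable) (hbr y)
  have key : ∀ ⦃x y : {v : V // v ≠ a}⦄,
      (reconnect T a m c \ SimpleGraph.fromEdgeSet {s(u, v)}).Adj x y →
      (((br x : ℕ) ≤ (i : ℕ)) = ((br y : ℕ) ≤ (i : ℕ))) := by
    intro x y hxy
    rw [SimpleGraph.sdiff_adj, SimpleGraph.fromEdgeSet_adj] at hxy
    obtain ⟨hG, hne⟩ := hxy
    have hxyne : x ≠ y := hG.ne
    have hnexy : ¬(x = u ∧ y = v) := by
      rintro ⟨rfl, rfl⟩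
      exact hne ⟨by simp, hxyne⟩
    have hneyx : ¬(y = u ∧ x = v) := by
      rintro ⟨rfl, rfl⟩
      exact hne ⟨by simp [Sym2.eq_swap], hxyne⟩
    by_cases hTxy : T.Adj x.1 y.1
    · rw [brmap x y hTxy]
    · simp only [reconnect, SimpleGraph.fromRel_adj] at hG
      obtain ⟨-, hrel⟩ := hG
      have hcase : ∃ i' j' : Fin m, (j' : ℕ) = (i' : ℕ) + 1 ∧
          ((x.1 = c i' ∧ y.1 = c j') ∨ (y.1 = c i' ∧ x.1 = c j')) := by
        rcases hrel with (h' | ⟨i', j', hj', h1, h2⟩) | (h' | ⟨i', j', hj', h1, h2⟩)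
        · exact absurd h' hTxy
        · exact ⟨i', j', hj', Or.inl ⟨h1, h2⟩⟩
        · exact absurd h'.symm hTxy
        · exact ⟨i', j', hj', Or.inr ⟨h1, h2⟩⟩
      obtain ⟨i', j', hj', hor⟩ := hcase
      have hii' : (i' : ℕ) ≠ (i : ℕ) := by
        intro hii
        have hi'i : i' = i := Fin.ext hii
        have hj'j : j' = j := Fin.ext (by omega)
        subst hi'i; subst hj'j
        rcases hor with ⟨h1, h2⟩ | ⟨h1, h2⟩
        · exact hnexy ⟨Subtype.ext (h1.trans hui.symm), Subtype.ext (h2.trans hvj.symm)⟩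
        · exact hneyx ⟨Subtype.ext (h1.trans hui.symm), Subtype.ext (h2.trans hvj.symm)⟩
      rcases hor with ⟨h1, h2⟩ | ⟨h1, h2⟩
      · rw [brc x i' h1, brc y j' h2]
        exact propext (by constructor <;> (intro; omega))
      · rw [brc y i' h1, brc x j' h2]
        exact propext (by constructor <;> (intro; omega))
  have h := reach_inv (G := reconnect T a m c \ SimpleGraph.fromEdgeSet {s(u, v)})
    (fun w => ((br w : ℕ) ≤ (i : ℕ))) key hreach
  simp only [brc u i hui, brc v j hvj] at h
  have : (j : ℕ) ≤ (i : ℕ) := cast h (le_refl _)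
  omega

end ReconnectAux

theorem stmt_7 {V : Type*} [Fintype V] (hcard : 2 ≤ Fintype.card V)
    (T : SimpleGraph V) (hT : T.IsTree) (a : V)
    (m : ℕ) (c : Fin m → V) (hc : Function.Injective c)
    (hrange : Set.range c = T.neighborSet a) :
    (reconnect T a m c).IsTree := by
  classical
  have hca : ∀ k : Fin m, c k ≠ a := fun k => (ReconnectAux.adj_a hrange k).ne'
  constructor
  · -- Connected
    have hne : Nonempty {v : V // v ≠ a} := by
      obtain ⟨b, hb⟩ := Fintype.exists_ne_of_one_lt_card (by omega) a
      exact ⟨⟨b, hb⟩⟩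
    refine SimpleGraph.Connected.mk ?_
    intro u v
    obtain ⟨p⟩ := hT.isConnected u.1 v.1
    have := ReconnectAux.to_reconnect hc hrange hca p.length u.2 v.2 p rfl
    simpa using this
  · -- Acyclic
    rw [SimpleGraph.isAcyclic_iff_forall_adj_isBridge]
    intro u v huv
    rw [SimpleGraph.isBridge_iff]
    by_cases hTadj : T.Adj u.1 v.1
    · exact ReconnectAux.bridge_T hT hrange hTadj
    · have h' := huv
      simp only [reconnect, SimpleGraph.fromRel_adj] at h'
      obtain ⟨hne, hrel⟩ := h'
      rcases hrel with (hT' | ⟨i, j, hji, hx, hy⟩) | (hT' | ⟨i, j, hji, hx, hy⟩)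
      · exact absurd hT' hTadj
      · exact ReconnectAux.bridge_path hT hc hrange hji hx hy
      · exact absurd hT'.symm hTadj
      · have hb := ReconnectAux.bridge_path hT hc hrange hji hx hy
        intro hr
        apply hb
        rw [Sym2.eq_swap] at hr
        exact hr.symm
end

section
/- Let G be a complete graph on a finite point set in ℝ² with Euclidean edge weights, let T be a spanning tree of G, and let a be a vertex of T with neighbors c_1, ..., c_k. Let T' be the tree on the remaining vertices obtained by deleting a and adding edges (c_i, c_{i+1}) for 1 ≤ i ≤ k−1. Then cost(T') ≤ cost(T) + Σ_{i=1}^{k} dist(c_i, a), and in particular cost(T') ≤ 2·cost(T). -/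
open scoped Classical

/-- Cost of a graph on finitely many vertices placed at points in the plane:
half the sum over ordered pairs of adjacent vertices of their Euclidean distance. -/
noncomputable def euclCost {V : Type*} [Fintype V]
    (pts : V → EuclideanSpace ℝ (Fin 2)) (G : SimpleGraph V) : ℝ :=
  (1 / 2) * ∑ u : V, ∑ v : V, if G.Adj u v then dist (pts u) (pts v) else 0

lemma sum_comm4 {α γ M : Type*} [Fintype α] [Fintype γ] [AddCommMonoid M]
    (g : α → α → γ → γ → M) :
    ∑ a : α, ∑ b : α, ∑ i : γ, ∑ j : γ, g a b i j
      = ∑ i : γ, ∑ j : γ, ∑ a : α, ∑ b : α, g a b i j := by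
  calc ∑ a : α, ∑ b : α, ∑ i : γ, ∑ j : γ, g a b i j
      = ∑ a : α, ∑ i : γ, ∑ b : α, ∑ j : γ, g a b i j :=
        Finset.sum_congr rfl fun a _ => Finset.sum_comm
    _ = ∑ i : γ, ∑ a : α, ∑ b : α, ∑ j : γ, g a b i j := Finset.sum_comm
    _ = ∑ i : γ, ∑ a : α, ∑ j : γ, ∑ b : α, g a b i j :=
        Finset.sum_congr rfl fun i _ => Finset.sum_congr rfl fun a _ => Finset.sum_comm
    _ = ∑ i : γ, ∑ j : γ, ∑ a : α, ∑ b : α, g a b i j :=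
        Finset.sum_congr rfl fun i _ => Finset.sum_comm

lemma sum_ite_unique_le {γ : Type*} [Fintype γ] {p : γ → Prop} [DecidablePred p]
    (hp : ∀ j k, p j → p k → j = k) {x : ℝ} (hx : 0 ≤ x) :
    (∑ j : γ, if p j then x else 0) ≤ x := by
  classical
  rw [Finset.sum_ite, Finset.sum_const, Finset.sum_const_zero, add_zero, nsmul_eq_mul]
  have hcard : ((Finset.univ.filter p).card : ℝ) ≤ 1 := by
    have : (Finset.univ.filter p).card ≤ 1 :=
      Finset.card_le_one.mpr (fun u hu v hv => hp u v (Finset.mem_filter.mp hu).2 (Finset.mem_filter.mp hv).2)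
    exact_mod_cast this
  exact mul_le_of_le_one_left hx hcard

theorem stmt_8 {V : Type*} [Fintype V]
    (pts : V → EuclideanSpace ℝ (Fin 2))
    (T : SimpleGraph V) (hT : T.IsTree) (a : V)
    (m : ℕ) (c : Fin m → V) (hc : Function.Injective c)
    (hrange : Set.range c = T.neighborSet a) :
    euclCost (fun v : {v : V // v ≠ a} => pts v.1) (reconnect T a m c) ≤
        euclCost pts T + ∑ i : Fin m, dist (pts (c i)) (pts a) ∧
    euclCost (fun v : {v : V // v ≠ a} => pts v.1) (reconnect T a m c) ≤
        2 * euclCost pts T := by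
  classical
  set d : V → V → ℝ := fun u v => dist (pts u) (pts v) with hdd
  have hd0 : ∀ u v, 0 ≤ d u v := fun u v => dist_nonneg
  have hdsymm : ∀ u v, d u v = d v u := fun u v => dist_comm _ _
  have hdtri : ∀ u v w, d u v ≤ d u w + d w v := fun u v w => dist_triangle _ _ _
  have hca : ∀ i : Fin m, T.Adj a (c i) := by
    intro i
    have h : c i ∈ Set.range c := ⟨i, rfl⟩
    rw [hrange] at h
    exact h
  have hcne : ∀ i : Fin m, c i ≠ a := fun i => (hca i).ne'
  set C : Fin m → {v : V // v ≠ a} := fun i => ⟨c i, hcne i⟩ with hCC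
  set D : ℝ := ∑ i : Fin m, d (c i) a with hDD
  have hD0 : 0 ≤ D := Finset.sum_nonneg fun i _ => hd0 _ _
  set f : V → V → ℝ := fun u v => if T.Adj u v then d u v else 0 with hff
  have hf0 : ∀ u v, 0 ≤ f u v := by
    intro u v; simp only [hff]; split
    · exact hd0 _ _
    · exact le_refl 0
  set S1 : ℝ := ∑ u : {v : V // v ≠ a}, ∑ v : {v : V // v ≠ a}, f u.1 v.1 with hS1
  have hS10 : 0 ≤ S1 :=
    Finset.sum_nonneg fun u _ => Finset.sum_nonneg fun v _ => hf0 _ _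
  -- splitting a sum over V at a
  have hsplit : ∀ g : V → ℝ, ∑ u : V, g u = (∑ u : {v : V // v ≠ a}, g u.1) + g a := by
    intro g
    have h1 : ∑ u ∈ ({a}ᶜ : Finset V), g u = ∑ u : {v : V // v ≠ a}, g u.1 :=
      Finset.sum_subtype _ (by simp) g
    rw [Fintype.sum_eq_add_sum_compl a g, h1]; ring
  -- sum over neighbors of a
  have himg : Finset.image c Finset.univ = T.neighborFinset a := by
    ext v
    simp only [Finset.mem_image, Finset.mem_univ, true_and, SimpleGraph.mem_neighborFinset]
    constructor
    · rintro ⟨i, rfl⟩; exact hca i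
    · intro h
      have hv : v ∈ Set.range c := by rw [hrange]; exact h
      exact hv
  have hstar : ∀ g : V → ℝ,
      (∑ v : V, if T.Adj a v then g v else 0) = ∑ i : Fin m, g (c i) := by
    intro g
    rw [← Finset.sum_filter]
    have hfil : Finset.univ.filter (fun v => T.Adj a v) = T.neighborFinset a := by
      ext v; simp [SimpleGraph.mem_neighborFinset]
    rw [hfil, ← himg, Finset.sum_image (fun x _ y _ h => hc h)]
  -- the cost of T
  have hcostT : euclCost pts T = (1 / 2) * S1 + D := by
    have e1 : ∑ u : V, ∑ v : V, f u v = S1 + 2 * D := by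
      have step1 : ∀ u : V, ∑ v : V, f u v
          = (∑ v : {v : V // v ≠ a}, f u v.1) + f u a := fun u => hsplit (f u)
      rw [Finset.sum_congr rfl fun u _ => step1 u, Finset.sum_add_distrib]
      have e2 : ∑ u : V, f u a = D := by
        have : ∀ u : V, f u a = if T.Adj a u then d u a else 0 := by
          intro u; simp only [hff]; rw [SimpleGraph.adj_comm]
        rw [Finset.sum_congr rfl fun u _ => this u, hstar (fun u => d u a)]
      have e3 : ∑ u : V, ∑ v : {v : V // v ≠ a}, f u v.1 = S1 + D := by
        rw [Finset.sum_comm]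
        have step2 : ∀ v : {v : V // v ≠ a}, ∑ u : V, f u v.1
            = (∑ u : {v : V // v ≠ a}, f u.1 v.1) + f a v.1 := fun v => hsplit (fun u => f u v.1)
        rw [Finset.sum_congr rfl fun v _ => step2 v, Finset.sum_add_distrib]
        have ecomm : ∑ x : {v : V // v ≠ a}, ∑ u : {v : V // v ≠ a}, f u.1 x.1 = S1 := by
          rw [hS1]; exact Finset.sum_comm
        have e4 : ∑ v : {v : V // v ≠ a}, f a v.1 = D := by
          have e5 : ∑ v : V, f a v = (∑ v : {v : V // v ≠ a}, f a v.1) + f a a := hsplit (f a)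
          have e6 : f a a = 0 := by simp [hff]
          have e7 : ∑ v : V, f a v = D := by
            simp only [hff]
            rw [hstar (fun v => d a v)]
            exact Finset.sum_congr rfl fun i _ => hdsymm a (c i)
          rw [e6, add_zero] at e5
          rw [← e5, e7]
        rw [e4, ecomm]
      rw [e2, e3]; ring
    rw [euclCost]
    have : ∑ u : V, ∑ v : V, (if T.Adj u v then dist (pts u) (pts v) else 0)
        = ∑ u : V, ∑ v : V, f u v := rfl
    rw [this, e1]; ring
  -- pointwise bound for the reconnect graph
  have hrec : ∀ u v : {v : V // v ≠ a},
      (if (reconnect T a m c).Adj u v then d u.1 v.1 else 0) ≤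
        f u.1 v.1 + ∑ i : Fin m, ∑ j : Fin m,
          (if ((j : ℕ) = (i : ℕ) + 1 ∧ ((u = C i ∧ v = C j) ∨ (v = C i ∧ u = C j)))
            then d u.1 v.1 else 0) := by
    intro u v
    have hx : 0 ≤ d u.1 v.1 := hd0 _ _
    have hterm0 : ∀ i j : Fin m, 0 ≤
        (if ((j : ℕ) = (i : ℕ) + 1 ∧ ((u = C i ∧ v = C j) ∨ (v = C i ∧ u = C j)))
          then d u.1 v.1 else 0) := by
      intro i j; split
      · exact hx
      · exact le_refl 0
    have hsum0 : 0 ≤ ∑ i : Fin m, ∑ j : Fin m,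
        (if ((j : ℕ) = (i : ℕ) + 1 ∧ ((u = C i ∧ v = C j) ∨ (v = C i ∧ u = C j)))
          then d u.1 v.1 else 0) :=
      Finset.sum_nonneg fun i _ => Finset.sum_nonneg fun j _ => hterm0 i j
    by_cases h : (reconnect T a m c).Adj u v
    · rw [if_pos h]
      rw [reconnect, SimpleGraph.fromRel_adj] at h
      obtain ⟨hne, hrel⟩ := h
      have hcase : T.Adj u.1 v.1 ∨ ∃ i j : Fin m, ((j : ℕ) = (i : ℕ) + 1 ∧
          ((u = C i ∧ v = C j) ∨ (v = C i ∧ u = C j))) := by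
        rcases hrel with (hA | ⟨i, j, hij, hu, hv⟩) | (hA | ⟨i, j, hij, hv, hu⟩)
        · exact Or.inl hA
        · exact Or.inr ⟨i, j, hij, Or.inl ⟨Subtype.ext hu, Subtype.ext hv⟩⟩
        · exact Or.inl hA.symm
        · exact Or.inr ⟨i, j, hij, Or.inr ⟨Subtype.ext hv, Subtype.ext hu⟩⟩
      rcases hcase with hA | ⟨i, j, hij⟩
      · have : f u.1 v.1 = d u.1 v.1 := if_pos hA
        linarith
      · have h1 : d u.1 v.1 ≤ ∑ j' : Fin m,
            (if ((j' : ℕ) = (i : ℕ) + 1 ∧ ((u = C i ∧ v = C j') ∨ (v = C i ∧ u = C j')))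
              then d u.1 v.1 else 0) := by
          have := Finset.single_le_sum
            (f := fun j' : Fin m =>
              (if ((j' : ℕ) = (i : ℕ) + 1 ∧ ((u = C i ∧ v = C j') ∨ (v = C i ∧ u = C j')))
                then d u.1 v.1 else 0))
            (fun j' _ => hterm0 i j') (Finset.mem_univ j)
          simpa only [if_pos hij] using this
        have h2 : (∑ j' : Fin m,
            (if ((j' : ℕ) = (i : ℕ) + 1 ∧ ((u = C i ∧ v = C j') ∨ (v = C i ∧ u = C j')))
              then d u.1 v.1 else 0)) ≤ ∑ i' : Fin m, ∑ j' : Fin m,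
            (if ((j' : ℕ) = (i' : ℕ) + 1 ∧ ((u = C i' ∧ v = C j') ∨ (v = C i' ∧ u = C j')))
              then d u.1 v.1 else 0) :=
          Finset.single_le_sum
            (f := fun i' : Fin m => ∑ j' : Fin m,
              (if ((j' : ℕ) = (i' : ℕ) + 1 ∧ ((u = C i' ∧ v = C j') ∨ (v = C i' ∧ u = C j')))
                then d u.1 v.1 else 0))
            (fun i' _ => Finset.sum_nonneg fun j' _ => hterm0 i' j') (Finset.mem_univ i)
        have h3 : 0 ≤ f u.1 v.1 := hf0 _ _
        linarith
    · rw [if_neg h]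
      exact add_nonneg (hf0 _ _) hsum0
  -- per-(i,j) inner sum computation
  have hinner : ∀ i j : Fin m,
      (∑ u : {v : V // v ≠ a}, ∑ v : {v : V // v ≠ a},
        (if ((j : ℕ) = (i : ℕ) + 1 ∧ ((u = C i ∧ v = C j) ∨ (v = C i ∧ u = C j)))
          then d u.1 v.1 else 0))
      ≤ (if (j : ℕ) = (i : ℕ) + 1 then 2 * (d (c i) a + d (c j) a) else 0) := by
    intro i j
    by_cases hij : (j : ℕ) = (i : ℕ) + 1
    · rw [if_pos hij]
      have hb : ∀ u v : {v : V // v ≠ a},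
          (if ((j : ℕ) = (i : ℕ) + 1 ∧ ((u = C i ∧ v = C j) ∨ (v = C i ∧ u = C j)))
            then d u.1 v.1 else 0)
          ≤ (if (u = C i ∧ v = C j) then d u.1 v.1 else 0)
            + (if (v = C i ∧ u = C j) then d u.1 v.1 else 0) := by
        intro u v
        have hx : 0 ≤ d u.1 v.1 := hd0 _ _
        have ht1 : 0 ≤ (if (u = C i ∧ v = C j) then d u.1 v.1 else 0) := by
          split; exacts [hx, le_refl 0]
        have ht2 : 0 ≤ (if (v = C i ∧ u = C j) then d u.1 v.1 else 0) := by
          split; exacts [hx, le_refl 0]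
        by_cases h : ((j : ℕ) = (i : ℕ) + 1 ∧ ((u = C i ∧ v = C j) ∨ (v = C i ∧ u = C j)))
        · rw [if_pos h]
          rcases h.2 with h2 | h2
          · rw [if_pos h2]; linarith
          · rw [if_pos h2]; linarith
        · rw [if_neg h]; exact add_nonneg ht1 ht2
      calc (∑ u : {v : V // v ≠ a}, ∑ v : {v : V // v ≠ a},
            (if ((j : ℕ) = (i : ℕ) + 1 ∧ ((u = C i ∧ v = C j) ∨ (v = C i ∧ u = C j)))
              then d u.1 v.1 else 0))
          ≤ ∑ u : {v : V // v ≠ a}, ∑ v : {v : V // v ≠ a},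
            ((if (u = C i ∧ v = C j) then d u.1 v.1 else 0)
              + (if (v = C i ∧ u = C j) then d u.1 v.1 else 0)) :=
            Finset.sum_le_sum fun u _ => Finset.sum_le_sum fun v _ => hb u v
        _ = d (c i) (c j) + d (c j) (c i) := by
            simp [ite_and, Finset.sum_ite_eq, Finset.sum_ite_eq', Finset.sum_add_distrib]
            rfl
        _ ≤ 2 * (d (c i) a + d (c j) a) := by
            have t1 : d (c i) (c j) ≤ d (c i) a + d (c j) a := by
              have := hdtri (c i) (c j) a
              rw [hdsymm a (c j)] at this
              linarith
            have t2 : d (c j) (c i) ≤ d (c i) a + d (c j) a := by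
              have := hdtri (c j) (c i) a
              rw [hdsymm a (c i)] at this
              linarith
            linarith
    · rw [if_neg hij]
      have : ∀ u v : {v : V // v ≠ a},
          (if ((j : ℕ) = (i : ℕ) + 1 ∧ ((u = C i ∧ v = C j) ∨ (v = C i ∧ u = C j)))
            then d u.1 v.1 else 0) = 0 := by
        intro u v; rw [if_neg]; rintro ⟨h1, -⟩; exact hij h1
      simp only [this, Finset.sum_const_zero, le_refl]
  -- sum the hinner bounds
  have hB : (∑ i : Fin m, ∑ j : Fin m,
      (if (j : ℕ) = (i : ℕ) + 1 then 2 * (d (c i) a + d (c j) a) else 0)) ≤ 4 * D := by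
    have hsplit2 : ∀ i j : Fin m,
        (if (j : ℕ) = (i : ℕ) + 1 then 2 * (d (c i) a + d (c j) a) else 0)
        = 2 * (if (j : ℕ) = (i : ℕ) + 1 then d (c i) a else 0)
          + 2 * (if (j : ℕ) = (i : ℕ) + 1 then d (c j) a else 0) := by
      intro i j; split <;> ring
    rw [Finset.sum_congr rfl fun i _ => Finset.sum_congr rfl fun j _ => hsplit2 i j]
    have hA1 : (∑ i : Fin m, ∑ j : Fin m,
        (if (j : ℕ) = (i : ℕ) + 1 then d (c i) a else 0)) ≤ D := by
      rw [hDD]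
      apply Finset.sum_le_sum
      intro i _
      exact sum_ite_unique_le (p := fun j : Fin m => (j : ℕ) = (i : ℕ) + 1)
        (fun j k hj hk => Fin.ext (by omega)) (hd0 _ _)
    have hA2 : (∑ i : Fin m, ∑ j : Fin m,
        (if (j : ℕ) = (i : ℕ) + 1 then d (c j) a else 0)) ≤ D := by
      rw [Finset.sum_comm, hDD]
      apply Finset.sum_le_sum
      intro j _
      exact sum_ite_unique_le (p := fun i : Fin m => (j : ℕ) = (i : ℕ) + 1)
        (fun i k hi hk => Fin.ext (by omega)) (hd0 _ _)
    calc (∑ i : Fin m, ∑ j : Fin m,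
          (2 * (if (j : ℕ) = (i : ℕ) + 1 then d (c i) a else 0)
            + 2 * (if (j : ℕ) = (i : ℕ) + 1 then d (c j) a else 0)))
        = 2 * (∑ i : Fin m, ∑ j : Fin m, (if (j : ℕ) = (i : ℕ) + 1 then d (c i) a else 0))
          + 2 * (∑ i : Fin m, ∑ j : Fin m, (if (j : ℕ) = (i : ℕ) + 1 then d (c j) a else 0)) := by
          simp [Finset.sum_add_distrib, Finset.mul_sum]
      _ ≤ 2 * D + 2 * D := by linarith
      _ = 4 * D := by ring
  -- main bound on cost of T'
  have hmain : euclCost (fun v : {v : V // v ≠ a} => pts v.1) (reconnect T a m c)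
      ≤ (1 / 2) * S1 + 2 * D := by
    rw [euclCost]
    have hsum : (∑ u : {v : V // v ≠ a}, ∑ v : {v : V // v ≠ a},
        (if (reconnect T a m c).Adj u v then d u.1 v.1 else 0)) ≤ S1 + 4 * D := by
      calc (∑ u : {v : V // v ≠ a}, ∑ v : {v : V // v ≠ a},
            (if (reconnect T a m c).Adj u v then d u.1 v.1 else 0))
          ≤ ∑ u : {v : V // v ≠ a}, ∑ v : {v : V // v ≠ a},
            (f u.1 v.1 + ∑ i : Fin m, ∑ j : Fin m,
              (if ((j : ℕ) = (i : ℕ) + 1 ∧ ((u = C i ∧ v = C j) ∨ (v = C i ∧ u = C j)))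
                then d u.1 v.1 else 0)) :=
            Finset.sum_le_sum fun u _ => Finset.sum_le_sum fun v _ => hrec u v
        _ = S1 + ∑ u : {v : V // v ≠ a}, ∑ v : {v : V // v ≠ a},
              ∑ i : Fin m, ∑ j : Fin m,
              (if ((j : ℕ) = (i : ℕ) + 1 ∧ ((u = C i ∧ v = C j) ∨ (v = C i ∧ u = C j)))
                then d u.1 v.1 else 0) := by
            simp [Finset.sum_add_distrib, hS1]
        _ ≤ S1 + 4 * D := by
            have := sum_comm4 (fun (u v : {v : V // v ≠ a}) (i j : Fin m) =>
              (if ((j : ℕ) = (i : ℕ) + 1 ∧ ((u = C i ∧ v = C j) ∨ (v = C i ∧ u = C j)))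
                then d u.1 v.1 else 0))
            rw [this]
            have hle : (∑ i : Fin m, ∑ j : Fin m, ∑ u : {v : V // v ≠ a},
                ∑ v : {v : V // v ≠ a},
                (if ((j : ℕ) = (i : ℕ) + 1 ∧ ((u = C i ∧ v = C j) ∨ (v = C i ∧ u = C j)))
                  then d u.1 v.1 else 0)) ≤ 4 * D := by
              calc (∑ i : Fin m, ∑ j : Fin m, ∑ u : {v : V // v ≠ a},
                    ∑ v : {v : V // v ≠ a},
                    (if ((j : ℕ) = (i : ℕ) + 1 ∧ ((u = C i ∧ v = C j) ∨ (v = C i ∧ u = C j)))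
                      then d u.1 v.1 else 0))
                  ≤ ∑ i : Fin m, ∑ j : Fin m,
                    (if (j : ℕ) = (i : ℕ) + 1 then 2 * (d (c i) a + d (c j) a) else 0) :=
                    Finset.sum_le_sum fun i _ => Finset.sum_le_sum fun j _ => hinner i j
                _ ≤ 4 * D := hB
            linarith
    have : (∑ u : {v : V // v ≠ a}, ∑ v : {v : V // v ≠ a},
        (if (reconnect T a m c).Adj u v
          then dist ((fun v : {v : V // v ≠ a} => pts v.1) u)
            ((fun v : {v : V // v ≠ a} => pts v.1) v) else 0))
        = (∑ u : {v : V // v ≠ a}, ∑ v : {v : V // v ≠ a},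
          (if (reconnect T a m c).Adj u v then d u.1 v.1 else 0)) := rfl
    rw [this]
    linarith
  have hDsum : D = ∑ i : Fin m, dist (pts (c i)) (pts a) := rfl
  constructor
  · rw [hcostT]
    linarith
  · rw [hcostT]
    linarith
end
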